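/- Let V, h : ℝᵖ → ℝ and k : ℝᵖ → ℝʳ be continuously differentiable, let β_V, β_h > 0, and define on ℝᵖ × ℝʳ the functions V₁(η, z) = V(η) + (1/(2β_V))‖z − k(η)‖² and h₁(η, z) = h(η) − (1/(2β_h))‖z − k(η)‖². Let G₁ : ℝᵖ × ℝʳ → ℝ^{r×m} be any map and let Ḡ₁(η,z)υ = (0, G₁(η,z)υ) ∈ ℝᵖ × ℝʳ. Then for all (η, z) and all υ ∈ ℝᵐ: (i) ⟨∇h₁(η,z), Ḡ₁(η,z)υ⟩ = −(β_V/β_h)·⟨∇V₁(η,z), Ḡ₁(η,z)υ⟩; and consequently (ii) for any F : ℝᵖ × ℝʳ → ℝᵖ × ℝʳ and reals γ̃, α̃, the pair of conditions ⟨∇V₁, F + Ḡ₁υ⟩ ≤ −γ̃ and ⟨∇h₁, F + Ḡ₁υ⟩ ≥ −α̃ (evaluated at (η,z)) holds if and only if ⟨∇V₁(η,z), Ḡ₁(η,z)υ⟩ ≤ min{ −(⟨∇V₁(η,z), F(η,z)⟩ + γ̃), (β_h/β_V)·(⟨∇h₁(η,z), F(η,z)⟩ + α̃) }. -/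

import Mathlib

open scoped RealInnerProductSpace

private lemma grad_pair {p r : ℕ} (V : EuclideanSpace ℝ (Fin p) → ℝ) (hV : ContDiff ℝ 1 V)
    (k : EuclideanSpace ℝ (Fin p) → EuclideanSpace ℝ (Fin r)) (hk : ContDiff ℝ 1 k)
    (c : ℝ) (η : EuclideanSpace ℝ (Fin p)) (z u : EuclideanSpace ℝ (Fin r)) :
    ⟪gradient (fun w : WithLp 2 (EuclideanSpace ℝ (Fin p) × EuclideanSpace ℝ (Fin r)) =>
        V ((WithLp.equiv 2 _) w).1 + c * ‖((WithLp.equiv 2 _) w).2 - k ((WithLp.equiv 2 _) w).1‖ ^ 2)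
      ((WithLp.equiv 2 _).symm (η, z)), (WithLp.equiv 2 _).symm (0, u)⟫ =
    2 * c * ⟪z - k η, u⟫ := by
  let E := EuclideanSpace ℝ (Fin p)
  let Fr := EuclideanSpace ℝ (Fin r)
  let eL : WithLp 2 (E × Fr) ≃L[ℝ] E × Fr := WithLp.prodContinuousLinearEquiv 2 ℝ E Fr
  let L : E × Fr →L[ℝ] Fr :=
    ContinuousLinearMap.snd ℝ E Fr - (fderiv ℝ k η).comp (ContinuousLinearMap.fst ℝ E Fr)
  have hVd : HasFDerivAt (fun q : E × Fr => V q.1)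
      ((fderiv ℝ V η).comp (ContinuousLinearMap.fst ℝ E Fr)) (η, z) :=
    HasFDerivAt.comp (𝕜 := ℝ) (η, z) ((hV.differentiable one_ne_zero η).hasFDerivAt) hasFDerivAt_fst
  have hkd : HasFDerivAt (fun q : E × Fr => k q.1)
      ((fderiv ℝ k η).comp (ContinuousLinearMap.fst ℝ E Fr)) (η, z) :=
    HasFDerivAt.comp (𝕜 := ℝ) (η, z) ((hk.differentiable one_ne_zero η).hasFDerivAt) hasFDerivAt_fst
  have hsub : HasFDerivAt (fun q : E × Fr => q.2 - k q.1) L (η, z) := hasFDerivAt_snd.sub hkd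
  have hinner : HasFDerivAt (fun q : E × Fr => ⟪q.2 - k q.1, q.2 - k q.1⟫)
      ((fderivInnerCLM ℝ (z - k η, z - k η)).comp (L.prod L)) (η, z) := hsub.inner ℝ hsub
  have hφ : HasFDerivAt (fun q : E × Fr => V q.1 + c * ⟪q.2 - k q.1, q.2 - k q.1⟫)
      ((fderiv ℝ V η).comp (ContinuousLinearMap.fst ℝ E Fr)
        + c • ((fderivInnerCLM ℝ (z - k η, z - k η)).comp (L.prod L))) (η, z) :=
    hVd.add (hinner.const_mul c)
  set D := (fderiv ℝ V η).comp (ContinuousLinearMap.fst ℝ E Fr)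
        + c • ((fderivInnerCLM ℝ (z - k η, z - k η)).comp (L.prod L)) with hD
  have heq : (fun w : WithLp 2 (E × Fr) =>
      V ((WithLp.equiv 2 _) w).1 + c * ‖((WithLp.equiv 2 _) w).2 - k ((WithLp.equiv 2 _) w).1‖ ^ 2)
      = (fun q : E × Fr => V q.1 + c * ⟪q.2 - k q.1, q.2 - k q.1⟫) ∘ eL := by
    funext w
    simp only [Function.comp, real_inner_self_eq_norm_sq]
    rfl
  have heLval : eL ((WithLp.equiv 2 (E × Fr)).symm (η, z)) = (η, z) := rfl
  have hf : HasFDerivAt (fun w : WithLp 2 (E × Fr) =>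
      V ((WithLp.equiv 2 _) w).1 + c * ‖((WithLp.equiv 2 _) w).2 - k ((WithLp.equiv 2 _) w).1‖ ^ 2)
      (D.comp (eL : WithLp 2 (E × Fr) →L[ℝ] E × Fr)) ((WithLp.equiv 2 (E × Fr)).symm (η, z)) := by
    rw [heq]
    exact HasFDerivAt.comp (𝕜 := ℝ) _ hφ (eL.toContinuousLinearMap.hasFDerivAt)
  show ⟪gradient _ _, _⟫ = _
  have : ContinuousSMul ℝ (WithLp 2 (EuclideanSpace ℝ (Fin p) × EuclideanSpace ℝ (Fin r))) := IsBoundedSMul.continuousSMul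
  rw [gradient, hf.fderiv, InnerProductSpace.toDual_symm_apply]
  have h0 : eL ((WithLp.equiv 2 (E × Fr)).symm ((0 : E), u)) = (0, u) := rfl
  rw [ContinuousLinearMap.comp_apply]
  erw [h0]
  simp only [hD, ContinuousLinearMap.add_apply, ContinuousLinearMap.comp_apply,
    ContinuousLinearMap.coe_fst', ContinuousLinearMap.smul_apply, ContinuousLinearMap.prod_apply,
    ContinuousLinearMap.sub_apply, ContinuousLinearMap.coe_snd', fderivInnerCLM_apply, L]
  simp only [map_zero, sub_zero]
  rw [real_inner_comm u (z - k η), smul_eq_mul]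
  ring
private lemma scalar_iff (βV βh : ℝ) (hβV : 0 < βV) (hβh : 0 < βh) (I cV ch γt αt : ℝ) :
    (cV + 1/βV * I ≤ -γt ∧ ch + -(1/βh) * I ≥ -αt) ↔
    1/βV * I ≤ min (-(cV + γt)) (βh/βV * (ch + αt)) := by
  rw [le_min_iff]
  have hid : βh/βV * (1/βh * I) = 1/βV * I := by field_simp
  constructor
  · rintro ⟨h1, h2⟩
    refine ⟨by linarith, ?_⟩
    have h3 : 1/βh * I ≤ ch + αt := by linarith
    calc 1/βV * I = βh/βV * (1/βh * I) := hid.symm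
      _ ≤ βh/βV * (ch + αt) :=
        mul_le_mul_of_nonneg_left h3 (div_pos hβh hβV).le
  · rintro ⟨h1, h2⟩
    refine ⟨by linarith, ?_⟩
    have h3 : βV/βh * (1/βV * I) ≤ βV/βh * (βh/βV * (ch + αt)) :=
      mul_le_mul_of_nonneg_left h2 (div_pos hβV hβh).le
    have e1 : βV/βh * (1/βV * I) = 1/βh * I := by field_simp
    have e2 : βV/βh * (βh/βV * (ch + αt)) = ch + αt := by field_simp
    rw [e1, e2] at h3
    linarith


/-- for the jointly backstepped CLF
`V₁(η,z) = V(η) + (1/(2β_V))‖z - k(η)‖²` and CBF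
`h₁(η,z) = h(η) - (1/(2β_h))‖z - k(η)‖²`, the input-direction Lie derivatives
are negatively proportional:
`⟪∇h₁, Ḡ₁υ⟫ = -(β_V/β_h)⟪∇V₁, Ḡ₁υ⟫`, and consequently the joint CLF-CBF
conditions reduce to a single linear inequality in the input `υ`. -/
theorem stmt_18 {p r m : ℕ}
    (V h : EuclideanSpace ℝ (Fin p) → ℝ)
    (hV : ContDiff ℝ 1 V) (hh : ContDiff ℝ 1 h)
    (k : EuclideanSpace ℝ (Fin p) → EuclideanSpace ℝ (Fin r))
    (hk : ContDiff ℝ 1 k)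
    (βV βh : ℝ) (hβV : 0 < βV) (hβh : 0 < βh)
    (G₁ : EuclideanSpace ℝ (Fin p) × EuclideanSpace ℝ (Fin r) →
      (EuclideanSpace ℝ (Fin m) →L[ℝ] EuclideanSpace ℝ (Fin r)))
    (F : EuclideanSpace ℝ (Fin p) × EuclideanSpace ℝ (Fin r) →
      EuclideanSpace ℝ (Fin p) × EuclideanSpace ℝ (Fin r)) :
    let e := WithLp.equiv 2
      (EuclideanSpace ℝ (Fin p) × EuclideanSpace ℝ (Fin r))
    let V₁ : WithLp 2 (EuclideanSpace ℝ (Fin p) × EuclideanSpace ℝ (Fin r)) → ℝ :=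
      fun w => V (e w).1 + 1 / (2 * βV) * ‖(e w).2 - k (e w).1‖ ^ 2
    let h₁ : WithLp 2 (EuclideanSpace ℝ (Fin p) × EuclideanSpace ℝ (Fin r)) → ℝ :=
      fun w => h (e w).1 - 1 / (2 * βh) * ‖(e w).2 - k (e w).1‖ ^ 2
    (∀ (η : EuclideanSpace ℝ (Fin p)) (z : EuclideanSpace ℝ (Fin r))
        (υ : EuclideanSpace ℝ (Fin m)),
      ⟪gradient h₁ (e.symm (η, z)), e.symm (0, G₁ (η, z) υ)⟫ =
        -(βV / βh) * ⟪gradient V₁ (e.symm (η, z)), e.symm (0, G₁ (η, z) υ)⟫) ∧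
    (∀ (η : EuclideanSpace ℝ (Fin p)) (z : EuclideanSpace ℝ (Fin r))
        (υ : EuclideanSpace ℝ (Fin m)) (γt αt : ℝ),
      (⟪gradient V₁ (e.symm (η, z)),
          e.symm (F (η, z)) + e.symm (0, G₁ (η, z) υ)⟫ ≤ -γt ∧
       ⟪gradient h₁ (e.symm (η, z)),
          e.symm (F (η, z)) + e.symm (0, G₁ (η, z) υ)⟫ ≥ -αt) ↔
      ⟪gradient V₁ (e.symm (η, z)), e.symm (0, G₁ (η, z) υ)⟫ ≤
        min (-(⟪gradient V₁ (e.symm (η, z)), e.symm (F (η, z))⟫ + γt))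
          (βh / βV * (⟪gradient h₁ (e.symm (η, z)), e.symm (F (η, z))⟫ + αt))) := by
  intro e V₁ h₁
  have hh₁ : h₁ = fun w => h (e w).1 + (-(1 / (2 * βh))) * ‖(e w).2 - k (e w).1‖ ^ 2 := by
    funext w
    show h (e w).1 - 1 / (2 * βh) * ‖(e w).2 - k (e w).1‖ ^ 2 = _
    ring
  have hVg : ∀ (η : EuclideanSpace ℝ (Fin p)) (z u : EuclideanSpace ℝ (Fin r)),
      ⟪gradient V₁ (e.symm (η, z)), e.symm (0, u)⟫ = 1/βV * ⟪z - k η, u⟫ := by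
    intro η z u
    have := grad_pair V hV k hk (1 / (2 * βV)) η z u
    rw [show (2 * (1 / (2 * βV)) : ℝ) = 1/βV by field_simp] at this
    exact this
  have hhg : ∀ (η : EuclideanSpace ℝ (Fin p)) (z u : EuclideanSpace ℝ (Fin r)),
      ⟪gradient h₁ (e.symm (η, z)), e.symm (0, u)⟫ = -(1/βh) * ⟪z - k η, u⟫ := by
    intro η z u
    rw [hh₁]
    have := grad_pair h hh k hk (-(1 / (2 * βh))) η z u
    rw [show (2 * (-(1 / (2 * βh))) : ℝ) = -(1/βh) by field_simp] at this
    exact this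
  constructor
  · intro η z υ
    rw [hVg, hhg]
    field_simp
  · intro η z υ γt αt
    rw [inner_add_right, inner_add_right, hVg, hhg]
    exact scalar_iff βV βh hβV hβh (⟪z - k η, G₁ (η, z) υ⟫)
      (⟪gradient V₁ (e.symm (η, z)), e.symm (F (η, z))⟫)
      (⟪gradient h₁ (e.symm (η, z)), e.symm (F (η, z))⟫) γt αt
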